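/- Let T be a pruned tree of sequences and ξ an inductive probability measure on T. Then ξ is free (⨅_{n ∈ ℕ} ξ(x↾n) = 0 for every x ∈ lim T) if and only if Q_ξ is dense in the interval [0,1]. -/

import Mathlib

open scoped ENNReal
open MeasureTheory

noncomputable section

/-- A tree of sequences: a nonempty set of finite lists of naturals closed under prefixes. -/
def IsTree (T : Set (List ℕ)) : Prop :=
  T.Nonempty ∧ ∀ s t : List ℕ, s <+: t → t ∈ T → s ∈ T

/-- `t` is a maximal node of `T`: it has no successor in `T`. -/
def IsMaxNode (T : Set (List ℕ)) (t : List ℕ) : Prop :=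
  ∀ k : ℕ, t ++ [k] ∉ T

/-- A probability tree on `T`. -/
def IsProbTree (T : Set (List ℕ)) (p : List ℕ → ℕ → ℝ≥0∞) : Prop :=
  ∀ t ∈ T, ¬ IsMaxNode T t →
    (∀ k : ℕ, t ++ [k] ∉ T → p t k = 0) ∧ (∑' k : ℕ, p t k = 1)

/-- The measure induced by a probability tree: `Ξ_p(t) = ∏_{i<|t|} p (t↾i) (t i)`. -/
def Xi (p : List ℕ → ℕ → ℝ≥0∞) (t : List ℕ) : ℝ≥0∞ :=
  ∏ i ∈ Finset.range t.length, p (t.take i) (t.getD i 0)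

/-- An inductive probability measure on `T`. -/
def IsIPM (T : Set (List ℕ)) (ξ : List ℕ → ℝ≥0∞) : Prop :=
  ξ [] = 1 ∧ ∀ t ∈ T, ¬ IsMaxNode T t →
    ξ t = ∑' k : {k : ℕ // t ++ [k] ∈ T}, ξ (t ++ [k.1])

/-- The set of infinite branches of `T`. -/
def limT (T : Set (List ℕ)) : Set (ℕ → ℕ) :=
  {x | ∀ n : ℕ, (List.range n).map x ∈ T}

/-- `T` is pruned: every node has a successor in `T`. -/
def Pruned (T : Set (List ℕ)) : Prop := ∀ t ∈ T, ∃ k : ℕ, t ++ [k] ∈ T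

/-- The basic clopen set `[t]` of branches through `t`. -/
def cyl (T : Set (List ℕ)) (t : List ℕ) : Set ↥(limT T) :=
  {x | (List.range t.length).map x.1 = t}

/-- `ξ` is free: all branches have measure (infimum) zero. -/
def FreeIPM (T : Set (List ℕ)) (ξ : List ℕ → ℝ≥0∞) : Prop :=
  ∀ x ∈ limT T, (⨅ n : ℕ, ξ ((List.range n).map x)) = 0

/-- Lexicographic order for lists (of equal length): they first differ at some
index `i < |s|` where `s` is smaller. -/
def lexLt (s t : List ℕ) : Prop :=
  ∃ i : ℕ, i < s.length ∧ s.take i = t.take i ∧ s.getD i 0 < t.getD i 0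

/-- The left endpoint `a_t` of the interval associated to `t`. -/
def aT (T : Set (List ℕ)) (ξ : List ℕ → ℝ≥0∞) (t : List ℕ) : ℝ :=
  (∑' s : {s : List ℕ // s ∈ T ∧ s.length = t.length ∧ lexLt s t}, ξ s.1).toReal

/-- The right endpoint `b_t = a_t + ξ(t)`. -/
def bT (T : Set (List ℕ)) (ξ : List ℕ → ℝ≥0∞) (t : List ℕ) : ℝ :=
  aT T ξ t + (ξ t).toReal

/-- The set of endpoints `Q_ξ`. -/
def Qxi (T : Set (List ℕ)) (ξ : List ℕ → ℝ≥0∞) : Set ℝ :=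
  {y | ∃ t ∈ T, y = aT T ξ t} ∪ {y | ∃ t ∈ T, y = bT T ξ t}



lemma getD_take' {s : List ℕ} {i j : ℕ} (h : i < j) : (s.take j).getD i 0 = s.getD i 0 := by
  simp [List.getD_eq_getElem?_getD, List.getElem?_take, h]

lemma lexLt_irrefl (t : List ℕ) : ¬ lexLt t t := by
  rintro ⟨i, hi, _, hlt⟩; exact lt_irrefl _ hlt

lemma take_eq_of_take_eq {s t : List ℕ} {i j : ℕ} (h : i ≤ j) (hst : s.take j = t.take j) :
    s.take i = t.take i := by
  have := congrArg (List.take i) hst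
  simpa [List.take_take, Nat.min_eq_left h] using this

lemma getD_eq_of_take_eq {s t : List ℕ} {i j : ℕ} (h : i < j) (hst : s.take j = t.take j) :
    s.getD i 0 = t.getD i 0 := by
  rw [← getD_take' h, hst, getD_take' h]

lemma lexLt_trans {r s t : List ℕ} (h1 : lexLt r s) (h2 : lexLt s t) : lexLt r t := by
  obtain ⟨i, hi, hti, hgi⟩ := h1
  obtain ⟨j, hj, htj, hgj⟩ := h2
  rcases lt_trichotomy i j with h | h | h
  · exact ⟨i, hi, by rw [hti, take_eq_of_take_eq h.le htj],
      by rw [← getD_eq_of_take_eq h htj]; exact hgi⟩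
  · subst h; exact ⟨i, hi, hti.trans htj, hgi.trans hgj⟩
  · refine ⟨j, lt_of_le_of_lt (Nat.le_of_lt h) hi, ?_, ?_⟩
    · rw [take_eq_of_take_eq h.le hti, htj]
    · rw [getD_eq_of_take_eq h hti]; exact hgj

lemma lexLt_total {s t : List ℕ} (hl : s.length = t.length) (hne : s ≠ t) :
    lexLt s t ∨ lexLt t s := by
  classical
  have hex : ∃ i, s.getD i 0 ≠ t.getD i 0 := by
    by_contra hc
    push_neg at hc
    apply hne
    apply List.ext_getElem hl
    intro i h1 h2
    rw [← List.getD_eq_getElem s 0 h1, ← List.getD_eq_getElem t 0 h2]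
    exact hc i
  let i := Nat.find hex
  have hi : s.getD i 0 ≠ t.getD i 0 := Nat.find_spec hex
  have hmin : ∀ j < i, s.getD j 0 = t.getD j 0 := fun j hj => by
    have := Nat.find_min hex hj; simpa using this
  have hilt : i < s.length := by
    by_contra hc
    push_neg at hc
    apply hi
    rw [List.getD_eq_default _ _ hc, List.getD_eq_default _ _ (hl ▸ hc)]
  have htake : s.take i = t.take i := by
    apply List.ext_getElem (by simp [hl])
    intro j h1 h2
    have hji : j < i := by simp at h1; omega
    have e1 : (s.take i)[j] = s[j]'(by omega) := List.getElem_take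
    have e2 : (t.take i)[j] = t[j]'(by simp at h2; omega) := List.getElem_take
    rw [e1, e2, ← List.getD_eq_getElem s 0, ← List.getD_eq_getElem t 0]
    exact hmin j hji
  rcases lt_or_gt_of_ne hi with h | h
  · exact Or.inl ⟨i, hilt, htake, h⟩
  · exact Or.inr ⟨i, hl ▸ hilt, htake.symm, h⟩

lemma eq_take_concat {s : List ℕ} {n : ℕ} (h : s.length = n + 1) :
    s = s.take n ++ [s.getD n 0] := by
  obtain ⟨a, ha⟩ : ∃ a, s.drop n = [a] := by
    exact List.length_eq_one_iff.mp (by simp [h])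
  have hga : s.getD n 0 = a := by
    rw [List.getD_eq_getElem s 0 (by omega)]
    have : (s.drop n)[0]'(by rw [ha]; simp) = s[n + 0]'(by omega) := List.getElem_drop
    simpa [ha] using this.symm
  rw [hga, ← ha, List.take_append_drop]


noncomputable section
namespace Std14

variable (T : Set (List ℕ)) (ξ : List ℕ → ℝ≥0∞)

def eS (t : List ℕ) : Set (List ℕ) := {s | s ∈ T ∧ s.length = t.length ∧ lexLt s t}

def eA (t : List ℕ) : ℝ≥0∞ := ∑' s : eS T t, ξ s

def pc (t : List ℕ) : ℕ → ℝ≥0∞ := Set.indicator {j | t ++ [j] ∈ T} (fun j => ξ (t ++ [j]))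

variable {T ξ}
variable (hT : IsTree T) (hpr : Pruned T) (hξ : IsIPM T ξ)

include hT in
lemma nil_mem : [] ∈ T := by
  obtain ⟨t, ht⟩ := hT.1
  exact hT.2 [] t List.nil_prefix ht

include hpr hξ in
lemma xi_eq {t : List ℕ} (ht : t ∈ T) : ξ t = ∑' j : ℕ, pc T ξ t j := by
  have hnm : ¬ IsMaxNode T t := fun hm => by
    obtain ⟨k, hk⟩ := hpr t ht; exact hm k hk
  rw [hξ.2 t ht hnm]
  exact tsum_subtype {j | t ++ [j] ∈ T} (fun j => ξ (t ++ [j]))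

lemma eA_eq_indicator (t : List ℕ) : eA T ξ t = ∑' s : List ℕ, (eS T t).indicator ξ s :=
  tsum_subtype _ _

lemma eA_nil : eA T ξ [] = 0 := by
  have h : eS T [] = ∅ := by
    ext s
    simp only [eS, Set.mem_setOf_eq, Set.mem_empty_iff_false, iff_false, not_and]
    rintro _ hlen ⟨i, hi, _⟩
    simp only [List.length_nil] at hlen
    omega
  rw [eA, h]
  exact tsum_empty

lemma getD_concat_length (t : List ℕ) (k : ℕ) : (t ++ [k]).getD t.length 0 = k := by
  rw [List.getD_eq_getElem _ 0 (by simp)]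
  exact List.getElem_concat_length rfl _

lemma take_concat_length (t : List ℕ) (k : ℕ) : (t ++ [k]).take t.length = t :=
  List.take_left

include hT hpr hξ in
lemma tile {t : List ℕ} (ht : t ∈ T) {k : ℕ} (hk : t ++ [k] ∈ T) :
    eA T ξ (t ++ [k]) = eA T ξ t + ∑ j ∈ Finset.range k, pc T ξ t j := by
  classical
  set n := t.length with hn
  have hlen : (t ++ [k]).length = n + 1 := by simp [hn]
  set A : Set (List ℕ) :=
    {s | ∃ s' m, s' ∈ eS T t ∧ s' ++ [m] ∈ T ∧ s = s' ++ [m]} with hA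
  set B : Set (List ℕ) := {s | ∃ j, j < k ∧ t ++ [j] ∈ T ∧ s = t ++ [j]} with hB
  have hsplit : eS T (t ++ [k]) = A ∪ B := by
    ext s
    constructor
    · rintro ⟨hsT, hslen, i, hi, htake, hgetd⟩
      rw [hlen] at hslen
      have hdec := eq_take_concat hslen
      have hin : i < n + 1 := by omega
      rcases Nat.lt_or_ge i n with hilt | hige
      · -- goes to A
        left
        refine ⟨s.take n, s.getD n 0, ⟨hT.2 _ s (List.take_prefix n s) hsT,
          by rw [List.length_take]; omega,
          i, by rw [List.length_take]; omega, ?_, ?_⟩, hdec ▸ hsT, hdec⟩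
        · rw [List.take_take, Nat.min_eq_left hilt.le, htake,
            List.take_append_of_le_length (by omega)]
        · rw [getD_take' hilt]
          rw [List.getD_append _ _ _ _ (by omega)] at hgetd
          exact hgetd
      · -- i = n, goes to B
        have hieq : i = n := by omega
        subst hieq
        have htk : s.take n = t := by
          rw [htake, hn, take_concat_length]
        rw [hn, getD_concat_length] at hgetd
        right
        exact ⟨s.getD n 0, hgetd, by rw [← htk, ← hdec]; exact hsT, by rw [← htk]; exact hdec⟩
    · rintro (⟨s', m, ⟨hs'T, hs'len, i, hi, ht1, ht2⟩, hsmT, rfl⟩ | ⟨j, hj, hjT, rfl⟩)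
      · refine ⟨hsmT, by simp [hs'len], i, by simp; omega, ?_, ?_⟩
        · rw [List.take_append_of_le_length (by omega), ht1,
            ← List.take_append_of_le_length (l₂ := [k]) (by omega)]
        · rw [List.getD_append _ _ _ _ (by omega), List.getD_append _ _ _ _ (by omega)]
          exact ht2
      · refine ⟨hjT, by simp, n, by simp [hn], ?_, ?_⟩
        · rw [hn, take_concat_length, take_concat_length]
        · rw [hn, getD_concat_length, getD_concat_length]; exact hj
  have hdisj : Disjoint A B := by
    rw [Set.disjoint_left]
    rintro s ⟨s', m, ⟨_, hs'len, hlex⟩, _, rfl⟩ ⟨j, _, _, heq⟩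
    have : s' = t := (List.append_inj heq hs'len).1
    exact lexLt_irrefl t (this ▸ hlex)
  have hBsum : ∑' s : List ℕ, B.indicator ξ s = ∑ j ∈ Finset.range k, pc T ξ t j := by
    have hinj : Set.InjOn (fun j => t ++ [j]) ↑(Finset.range k) := by
      intro a _ b _ hab
      simpa using hab
    rw [tsum_eq_sum (s := (Finset.range k).image (fun j => t ++ [j]))
      (fun b hb => Set.indicator_of_notMem (fun hbB => by
        obtain ⟨j, hj, _, rfl⟩ := hbB
        exact hb (Finset.mem_image.mpr ⟨j, Finset.mem_range.mpr hj, rfl⟩)) _)]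
    rw [Finset.sum_image (fun a ha b hb hab => hinj ha hb hab)]
    apply Finset.sum_congr rfl
    intro j hj
    rw [Finset.mem_range] at hj
    simp only [pc]
    by_cases hjT : t ++ [j] ∈ T
    · have h1 : (t ++ [j]) ∈ B := ⟨j, hj, hjT, rfl⟩
      rw [Set.indicator_of_mem h1 ξ,
        Set.indicator_of_mem (show j ∈ {j | t ++ [j] ∈ T} from hjT)]
    · have h1 : (t ++ [j]) ∉ B := by
        rintro ⟨j', hj', hj'T, heq⟩
        have hjj : j' = j := by simpa using heq.symm
        exact hjT (hjj ▸ hj'T)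
      rw [Set.indicator_of_notMem h1 ξ,
        Set.indicator_of_notMem (show j ∉ {j | t ++ [j] ∈ T} from hjT)]
  have hAsum : ∑' s : List ℕ, A.indicator ξ s = eA T ξ t := by
    rw [← tsum_subtype]
    set f : (Σ s' : eS T t, {m : ℕ // (s' : List ℕ) ++ [m] ∈ T}) → ↑A :=
      (fun p => ⟨p.1.1 ++ [p.2.1], ⟨p.1.1, p.2.1, p.1.2, p.2.2, rfl⟩⟩) with hf
    have hbij : Function.Bijective f := by
      constructor
      · rintro ⟨⟨s1, hs1⟩, ⟨m1, hm1⟩⟩ ⟨⟨s2, hs2⟩, ⟨m2, hm2⟩⟩ hp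
        simp only [hf, Subtype.mk_eq_mk] at hp
        have hlen12 : s1.length = s2.length := by rw [hs1.2.1, hs2.2.1]
        obtain ⟨h1, h2⟩ := List.append_inj hp hlen12
        simp only [List.cons.injEq] at h2
        subst h1
        simp [h2.1]
      · rintro ⟨s, ⟨s', m, hs', hsm, rfl⟩⟩
        exact ⟨⟨⟨s', hs'⟩, ⟨m, hsm⟩⟩, rfl⟩
    let e := Equiv.ofBijective f hbij
    rw [← Equiv.tsum_eq e (fun x : A => ξ x)]
    have h1 : ∑' (c : (s' : ↑(eS T t)) × { m // ↑s' ++ [m] ∈ T }), ξ ↑(e c)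
        = ∑' (c : (s' : ↑(eS T t)) × { m // ↑s' ++ [m] ∈ T }), ξ ((c.1 : List ℕ) ++ [(c.2 : ℕ)]) :=
      tsum_congr fun c => rfl
    have hsig : ∑' (c : (s' : ↑(eS T t)) × { m // ↑s' ++ [m] ∈ T }), ξ ((c.1 : List ℕ) ++ [(c.2 : ℕ)])
        = ∑' (s' : ↑(eS T t)), ∑' (m : { m // (s' : List ℕ) ++ [m] ∈ T }), ξ ((s' : List ℕ) ++ [(m : ℕ)]) :=
      ENNReal.tsum_sigma (β := fun s' : ↑(eS T t) => { m // (s' : List ℕ) ++ [m] ∈ T })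
        (fun s' m => ξ ((s' : List ℕ) ++ [(m : ℕ)]))
    rw [h1, hsig, eA]
    apply tsum_congr
    intro s'
    have hnm : ¬ IsMaxNode T s'.1 := fun hm => by
      obtain ⟨k', hk'⟩ := hpr s'.1 s'.2.1; exact hm k' hk'
    rw [hξ.2 s'.1 s'.2.1 hnm]
  rw [eA_eq_indicator, hsplit, Set.indicator_union_of_disjoint hdisj, ENNReal.tsum_add,
    hAsum, hBsum]

include hT hpr hξ in
lemma tile_b {t : List ℕ} (ht : t ∈ T) {k : ℕ} (hk : t ++ [k] ∈ T) :
    eA T ξ (t ++ [k]) + ξ (t ++ [k]) = eA T ξ t + ∑ j ∈ Finset.range (k + 1), pc T ξ t j := by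
  rw [tile hT hpr hξ ht hk, Finset.sum_range_succ, ← add_assoc]
  congr 1
  simp only [pc]
  rw [Set.indicator_of_mem (show k ∈ {j | t ++ [j] ∈ T} from hk)]

include hT hpr hξ in
lemma eB_le_one : ∀ n : ℕ, ∀ t ∈ T, t.length = n → eA T ξ t + ξ t ≤ 1 := by
  intro n
  induction n with
  | zero =>
    intro t ht hlen
    rw [List.length_eq_zero_iff.mp hlen, eA_nil, hξ.1, zero_add]
  | succ n ih =>
    intro t ht hlen
    have hdec := eq_take_concat hlen
    set u := t.take n with hu
    set j := t.getD n 0 with hj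
    have huT : u ∈ T := hT.2 u t (List.take_prefix n t) ht
    have hujT : u ++ [j] ∈ T := hdec ▸ ht
    have hulen : u.length = n := by rw [hu, List.length_take]; omega
    calc eA T ξ t + ξ t = eA T ξ (u ++ [j]) + ξ (u ++ [j]) := by rw [← hdec]
      _ = eA T ξ u + ∑ i ∈ Finset.range (j + 1), pc T ξ u i := tile_b hT hpr hξ huT hujT
      _ ≤ eA T ξ u + ∑' i : ℕ, pc T ξ u i :=
          add_le_add le_rfl (ENNReal.sum_le_tsum _)
      _ = eA T ξ u + ξ u := by rw [← xi_eq hpr hξ huT]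
      _ ≤ 1 := ih u huT hulen

include hT hpr hξ in
lemma eB_le_one' {t : List ℕ} (ht : t ∈ T) : eA T ξ t + ξ t ≤ 1 :=
  eB_le_one hT hpr hξ t.length t ht rfl

include hT hpr hξ in
lemma eA_ne_top {t : List ℕ} (ht : t ∈ T) : eA T ξ t ≠ ⊤ :=
  fun h => by simpa [h] using eB_le_one' hT hpr hξ ht

include hT hpr hξ in
lemma xi_ne_top {t : List ℕ} (ht : t ∈ T) : ξ t ≠ ⊤ :=
  fun h => by simpa [h] using eB_le_one' hT hpr hξ ht

include hT hpr hξ in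
lemma eB_ne_top {t : List ℕ} (ht : t ∈ T) : eA T ξ t + ξ t ≠ ⊤ :=
  fun h => by simpa [h] using eB_le_one' hT hpr hξ ht

end Std14




namespace Std14
variable {T : Set (List ℕ)} {ξ : List ℕ → ℝ≥0∞}
variable (hT : IsTree T) (hpr : Pruned T) (hξ : IsIPM T ξ)

lemma aT_eq (t : List ℕ) : aT T ξ t = (eA T ξ t).toReal := rfl

include hT hpr hξ in
lemma bT_eq {t : List ℕ} (ht : t ∈ T) : bT T ξ t = (eA T ξ t + ξ t).toReal := by
  rw [bT, aT_eq, ENNReal.toReal_add (eA_ne_top hT hpr hξ ht) (xi_ne_top hT hpr hξ ht)]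

-- separation in ℝ≥0∞
include hT in
lemma sep {s t : List ℕ} (hs : s ∈ T) (hlen : s.length = t.length) (hst : lexLt s t) :
    eA T ξ s + ξ s ≤ eA T ξ t := by
  rw [eA_eq_indicator, eA_eq_indicator,
    show ξ s = ∑' r : List ℕ, ({s} : Set (List ℕ)).indicator ξ r by
      rw [← tsum_subtype]; exact (tsum_singleton s ξ).symm,
    ← ENNReal.tsum_add]
  apply ENNReal.tsum_le_tsum
  intro r
  by_cases hr : r = s
  · subst hr
    rw [Set.indicator_of_notMem (fun hm : r ∈ eS T r => lexLt_irrefl r hm.2.2) ξ,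
      Set.indicator_of_mem (Set.mem_singleton r) ξ,
      Set.indicator_of_mem (show r ∈ eS T t from ⟨hs, hlen, hst⟩) ξ, zero_add]
  · rw [Set.indicator_of_notMem (fun hm => hr (Set.mem_singleton_iff.mp hm)) ξ, add_zero]
    by_cases hre : r ∈ eS T s
    · rw [Set.indicator_of_mem hre ξ,
        Set.indicator_of_mem (show r ∈ eS T t from
          ⟨hre.1, hre.2.1.trans hlen, lexLt_trans hre.2.2 hst⟩) ξ]
    · rw [Set.indicator_of_notMem hre ξ]
      exact zero_le

include hT hpr hξ in
lemma step_lemma {y ε : ℝ} (hε : 0 < ε) (hQ : ∀ q ∈ Qxi T ξ, ε ≤ |y - q|)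
    {t : List ℕ} (ht : t ∈ T) (ha : aT T ξ t ≤ y) (hb : y ≤ bT T ξ t) :
    ∃ k : ℕ, t ++ [k] ∈ T ∧ aT T ξ (t ++ [k]) ≤ y ∧ y ≤ bT T ξ (t ++ [k]) := by
  classical
  have hy0 : 0 ≤ y := le_trans ENNReal.toReal_nonneg ha
  have haQ : aT T ξ t ∈ Qxi T ξ := Or.inl ⟨t, ht, rfl⟩
  have hbQ : bT T ξ t ∈ Qxi T ξ := Or.inr ⟨t, ht, rfl⟩
  have haε : aT T ξ t ≤ y - ε := by
    have := hQ _ haQ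
    rw [abs_of_nonneg (by linarith)] at this
    linarith
  have hbε : y + ε ≤ bT T ξ t := by
    have := hQ _ hbQ
    rcases abs_cases (y - bT T ξ t) with ⟨h1, _⟩ | ⟨h1, _⟩ <;> rw [h1] at this <;> linarith
  -- the candidate set is nonempty
  have hbnt := eB_ne_top hT hpr hξ ht
  have hKne : ∃ k : ℕ, t ++ [k] ∈ T ∧ y < bT T ξ (t ++ [k]) := by
    have h1 : ENNReal.ofReal y < eA T ξ t + ξ t := by
      refine (ENNReal.ofReal_lt_iff_lt_toReal hy0 hbnt).mpr ?_
      rw [← bT_eq hT hpr hξ ht]; linarith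
    rw [xi_eq hpr hξ ht, ENNReal.tsum_eq_iSup_sum, ENNReal.add_iSup] at h1
    rw [lt_iSup_iff] at h1
    obtain ⟨F, hF⟩ := h1
    set G := F.filter (fun j => t ++ [j] ∈ T) with hG
    have hFG : ∑ j ∈ F, pc T ξ t j = ∑ j ∈ G, pc T ξ t j := by
      refine (Finset.sum_subset (Finset.filter_subset _ _) ?_).symm
      intro x hxF hxG
      have : t ++ [x] ∉ T := fun hmem => hxG (Finset.mem_filter.mpr ⟨hxF, hmem⟩)
      exact Set.indicator_of_notMem this _
    rw [hFG] at hF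
    have hGne : G.Nonempty := by
      rcases Finset.eq_empty_or_nonempty G with h | h
      · rw [h, Finset.sum_empty, add_zero] at hF
        have : y < aT T ξ t := by
          rw [aT_eq]
          exact (ENNReal.ofReal_lt_iff_lt_toReal hy0 (eA_ne_top hT hpr hξ ht)).mp hF
        linarith
      · exact h
    set k0 := G.max' hGne with hk0
    have hk0T : t ++ [k0] ∈ T := (Finset.mem_filter.mp (G.max'_mem hGne)).2
    refine ⟨k0, hk0T, ?_⟩
    have hsub : G ⊆ Finset.range (k0 + 1) := fun j hj =>
      Finset.mem_range.mpr (Nat.lt_succ_of_le (G.le_max' j hj))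
    have h2 : ENNReal.ofReal y < eA T ξ t + ∑ j ∈ Finset.range (k0 + 1), pc T ξ t j :=
      lt_of_lt_of_le hF (add_le_add le_rfl (Finset.sum_le_sum_of_subset hsub))
    rw [← tile_b hT hpr hξ ht hk0T] at h2
    rw [bT_eq hT hpr hξ hk0T]
    exact (ENNReal.ofReal_lt_iff_lt_toReal hy0 (eB_ne_top hT hpr hξ hk0T)).mp h2
  -- take the least such k
  have hKex : ∃ k : ℕ, t ++ [k] ∈ T ∧ y < bT T ξ (t ++ [k]) := hKne
  set k := Nat.find hKex with hk
  obtain ⟨hkT, hkb⟩ := Nat.find_spec hKex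
  refine ⟨k, hkT, ?_, le_of_lt hkb⟩
  -- show aT (t ++ [k]) ≤ y
  by_contra hcon
  push_neg at hcon
  have htile := tile hT hpr hξ ht hkT
  set G' := (Finset.range k).filter (fun j => t ++ [j] ∈ T) with hG'
  rcases Finset.eq_empty_or_nonempty G' with hGe | hGne
  · have hzero : ∑ j ∈ Finset.range k, pc T ξ t j = 0 := by
      apply Finset.sum_eq_zero
      intro j hj
      have : t ++ [j] ∉ T := fun hmem => by
        have : j ∈ G' := Finset.mem_filter.mpr ⟨hj, hmem⟩
        rw [hGe] at this; simp at this
      exact Set.indicator_of_notMem this _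
    rw [aT_eq, htile, hzero, add_zero, ← aT_eq] at hcon
    linarith
  · set j' := G'.max' hGne with hj'
    have hj'mem := G'.max'_mem hGne
    have hj'k : j' < k := Finset.mem_range.mp (Finset.mem_filter.mp hj'mem).1
    have hj'T : t ++ [j'] ∈ T := (Finset.mem_filter.mp hj'mem).2
    have hsum : ∑ j ∈ Finset.range (j' + 1), pc T ξ t j = ∑ j ∈ Finset.range k, pc T ξ t j := by
      apply Finset.sum_subset (Finset.range_subset_range.mpr hj'k)
      intro x hxk hxj'
      rw [Finset.mem_range] at hxk hxj'
      push_neg at hxj'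
      have : t ++ [x] ∉ T := fun hmem => by
        have hxG : x ∈ G' := Finset.mem_filter.mpr ⟨Finset.mem_range.mpr hxk, hmem⟩
        have := G'.le_max' x hxG
        omega
      exact Set.indicator_of_notMem this _
    have hbj' : bT T ξ (t ++ [j']) = aT T ξ (t ++ [k]) := by
      rw [bT_eq hT hpr hξ hj'T, tile_b hT hpr hξ ht hj'T, hsum, aT_eq, htile]
    have : y < bT T ξ (t ++ [j']) := by rw [hbj']; exact hcon
    exact Nat.find_min hKex hj'k ⟨hj'T, this⟩

include hT hpr hξ in
lemma aT_child_le {t : List ℕ} (ht : t ∈ T) {k : ℕ} (hk : t ++ [k] ∈ T) :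
    aT T ξ t ≤ aT T ξ (t ++ [k]) := by
  rw [aT_eq, aT_eq]
  apply ENNReal.toReal_mono (eA_ne_top hT hpr hξ hk)
  rw [tile hT hpr hξ ht hk]
  exact le_self_add

include hT hpr hξ in
lemma bT_child_le {t : List ℕ} (ht : t ∈ T) {k : ℕ} (hk : t ++ [k] ∈ T) :
    bT T ξ (t ++ [k]) ≤ bT T ξ t := by
  rw [bT_eq hT hpr hξ hk, bT_eq hT hpr hξ ht]
  apply ENNReal.toReal_mono (eB_ne_top hT hpr hξ ht)
  rw [tile_b hT hpr hξ ht hk, xi_eq hpr hξ ht]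
  exact add_le_add le_rfl (ENNReal.sum_le_tsum _)

lemma aT_nil : aT T ξ [] = 0 := by rw [aT_eq, eA_nil]; simp

include hξ in
lemma bT_nil : bT T ξ [] = 1 := by rw [bT, aT_nil, hξ.1]; simp

end Std14


namespace Std14
variable {T : Set (List ℕ)} {ξ : List ℕ → ℝ≥0∞}
variable (hT : IsTree T) (hpr : Pruned T) (hξ : IsIPM T ξ)

include hT hpr hξ in
lemma fwd (hfree : FreeIPM T ξ) : Set.Icc (0 : ℝ) 1 ⊆ closure (Qxi T ξ) := by
  intro y hy
  by_contra hclos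
  rw [Metric.mem_closure_iff] at hclos
  push_neg at hclos
  obtain ⟨ε, hε, hQ'⟩ := hclos
  have hQ : ∀ q ∈ Qxi T ξ, ε ≤ |y - q| := fun q hq => by
    have := hQ' q hq
    rwa [Real.dist_eq] at this
  set Inv : ℕ → List ℕ → Prop :=
    fun n t => t ∈ T ∧ t.length = n ∧ aT T ξ t ≤ y ∧ y ≤ bT T ξ t with hInv
  have hbase : Inv 0 [] :=
    ⟨nil_mem hT, rfl, by rw [aT_nil]; exact hy.1, by rw [bT_nil hξ]; exact hy.2⟩
  have hstep : ∀ n t, Inv n t → ∃ k : ℕ, Inv (n + 1) (t ++ [k]) := by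
    rintro n t ⟨htT, htlen, hta, htb⟩
    obtain ⟨k, hkT, hka, hkb⟩ := step_lemma hT hpr hξ hε hQ htT hta htb
    exact ⟨k, hkT, by simp [htlen], hka, hkb⟩
  let f : (n : ℕ) → {t : List ℕ // Inv n t} := fun n =>
    Nat.rec ⟨[], hbase⟩
      (fun m p => ⟨p.1 ++ [Classical.choose (hstep m p.1 p.2)],
        Classical.choose_spec (hstep m p.1 p.2)⟩) n
  have hfs : ∀ n, (f (n + 1)).1 = (f n).1 ++ [Classical.choose (hstep n (f n).1 (f n).2)] :=
    fun n => rfl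
  set x : ℕ → ℕ := fun n => (f (n + 1)).1.getD n 0 with hxdef
  have hmap : ∀ n, (List.range n).map x = (f n).1 := by
    intro n
    induction n with
    | zero => rfl
    | succ n ih =>
      rw [List.range_succ, List.map_append, ih, List.map_singleton, hfs n]
      congr 1
      have hlen : ((f n).1).length = n := (f n).2.2.1
      rw [hxdef]
      simp only [hfs n]
      rw [List.getD_eq_getElem _ 0 (by simp [hlen]),
        List.getElem_concat_length hlen.symm]
  have hxlim : x ∈ limT T := fun n => (hmap n) ▸ (f n).2.1
  have hlow : ∀ n, ENNReal.ofReal (2 * ε) ≤ ξ ((List.range n).map x) := by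
    intro n
    rw [hmap n]
    obtain ⟨hfT, hflen, hfa, hfb⟩ := (f n).2
    have haQ : aT T ξ (f n).1 ∈ Qxi T ξ := Or.inl ⟨(f n).1, hfT, rfl⟩
    have hbQ : bT T ξ (f n).1 ∈ Qxi T ξ := Or.inr ⟨(f n).1, hfT, rfl⟩
    have h1 : aT T ξ (f n).1 ≤ y - ε := by
      have := hQ _ haQ; rw [abs_of_nonneg (by linarith)] at this; linarith
    have h2 : y + ε ≤ bT T ξ (f n).1 := by
      have := hQ _ hbQ
      rcases abs_cases (y - bT T ξ (f n).1) with ⟨hh, _⟩ | ⟨hh, _⟩ <;> rw [hh] at this <;> linarith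
    have h3 : 2 * ε ≤ (ξ (f n).1).toReal := by
      have := hfb
      rw [bT] at h2
      linarith
    calc ENNReal.ofReal (2 * ε) ≤ ENNReal.ofReal (ξ (f n).1).toReal := ENNReal.ofReal_le_ofReal h3
      _ = ξ (f n).1 := ENNReal.ofReal_toReal (xi_ne_top hT hpr hξ hfT)
  have := hfree x hxlim
  have hpos : 0 < ⨅ n : ℕ, ξ ((List.range n).map x) :=
    lt_of_lt_of_le (ENNReal.ofReal_pos.mpr (by linarith)) (le_iInf hlow)
  rw [this] at hpos
  exact lt_irrefl _ hpos


include hT hpr hξ in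
lemma bwd (hdense : Set.Icc (0 : ℝ) 1 ⊆ closure (Qxi T ξ)) : FreeIPM T ξ := by
  intro x hx
  by_contra hc
  set t : ℕ → List ℕ := fun n => (List.range n).map x with htdef
  have htT : ∀ n, t n ∈ T := hx
  have htlen : ∀ n, (t n).length = n := by intro n; simp [htdef]
  have hts : ∀ n, t (n + 1) = t n ++ [x n] := by
    intro n; rw [htdef]; simp [List.range_succ]
  set c : ℝ≥0∞ := ⨅ n : ℕ, ξ (t n) with hcdef
  have hcpos : 0 < c := pos_iff_ne_zero.mpr hc
  have hcle : ∀ n, c ≤ ξ (t n) := fun n => iInf_le _ n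
  have hxile : ∀ n, ξ (t n) ≤ 1 := fun n =>
    le_trans le_add_self (eB_le_one' hT hpr hξ (htT n))
  have hcne : c ≠ ⊤ := fun h => by
    have := (hcle 0).trans (hxile 0)
    rw [h] at this
    simp at this
  set cR := c.toReal with hcR
  have hcRpos : 0 < cR := ENNReal.toReal_pos hc hcne
  set a : ℕ → ℝ := fun n => aT T ξ (t n) with hadef
  set b : ℕ → ℝ := fun n => bT T ξ (t n) with hbdef
  have hamono : Monotone a := by
    apply monotone_nat_of_le_succ
    intro n
    rw [hadef]
    simp only []
    rw [hts n]
    exact aT_child_le hT hpr hξ (htT n) (hts n ▸ htT (n + 1))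
  have hbanti : Antitone b := by
    apply antitone_nat_of_succ_le
    intro n
    rw [hbdef]
    simp only []
    rw [hts n]
    exact bT_child_le hT hpr hξ (htT n) (hts n ▸ htT (n + 1))
  have hab : ∀ n, a n + cR ≤ b n := by
    intro n
    have h1 : cR ≤ (ξ (t n)).toReal :=
      ENNReal.toReal_mono (xi_ne_top hT hpr hξ (htT n)) (hcle n)
    rw [hadef, hbdef]
    simp only []
    rw [bT]
    linarith
  have ha0 : a 0 = 0 := by
    rw [hadef]; simp only []; rw [show t 0 = [] from rfl, aT_nil]
  have hb0 : b 0 = 1 := by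
    rw [hbdef]; simp only []; rw [show t 0 = [] from rfl, bT_nil hξ]
  have hbddA : BddAbove (Set.range a) := by
    refine ⟨1, ?_⟩
    rintro _ ⟨n, rfl⟩
    calc a n ≤ b n := by have := hab n; linarith
      _ ≤ b 0 := hbanti (Nat.zero_le n)
      _ = 1 := hb0
  have hbddB : BddBelow (Set.range b) := by
    refine ⟨0, ?_⟩
    rintro _ ⟨n, rfl⟩
    have h1 : (0 : ℝ) ≤ a n := by
      rw [hadef]; exact ENNReal.toReal_nonneg
    have := hab n; linarith
  set A := ⨆ n, a n with hA
  set B := ⨅ n, b n with hB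
  have hAle : ∀ n, a n ≤ A := fun n => le_ciSup hbddA n
  have hBle : ∀ n, B ≤ b n := fun n => ciInf_le hbddB n
  have hAcB : A + cR ≤ B := by
    rw [← sub_nonneg]
    have h1 : ∀ m, A + cR ≤ b m := by
      intro m
      have h2 : A ≤ b m - cR := by
        apply ciSup_le
        intro n
        have h3 : a n ≤ a (max n m) := hamono (le_max_left n m)
        have h4 : b (max n m) ≤ b m := hbanti (le_max_right n m)
        have h5 := hab (max n m)
        linarith
      linarith
    have := le_ciInf h1
    linarith
  have hA0 : 0 ≤ A := ha0 ▸ hAle 0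
  have hB1 : B ≤ 1 := hb0 ▸ hBle 0
  set mid := (A + B) / 2 with hmid
  have hmid01 : mid ∈ Set.Icc (0 : ℝ) 1 := by
    constructor
    · rw [hmid]; nlinarith
    · rw [hmid]; nlinarith
  have hmidcl := hdense hmid01
  rw [Metric.mem_closure_iff] at hmidcl
  obtain ⟨q, hq, hdist⟩ := hmidcl (cR / 2) (by linarith)
  have hab_le : ∀ s ∈ T, aT T ξ s ≤ bT T ξ s := by
    intro s hs
    rw [bT]
    have : (0:ℝ) ≤ (ξ s).toReal := ENNReal.toReal_nonneg
    linarith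
  have hkey : ∀ s ∈ T, (bT T ξ s ≤ A) ∨ (B ≤ aT T ξ s) ∨ s = t s.length := by
    intro s hs
    set m := s.length with hm
    have hlen' : s.length = (t m).length := by rw [htlen]
    by_cases hst : s = t m
    · exact Or.inr (Or.inr hst)
    · rcases lexLt_total hlen' hst with hlex | hlex
      · left
        have h1 := sep (T := T) (ξ := ξ) hT hs hlen' hlex
        have h2 : bT T ξ s ≤ aT T ξ (t m) := by
          rw [bT_eq hT hpr hξ hs, aT_eq]
          exact ENNReal.toReal_mono (eA_ne_top hT hpr hξ (htT m)) h1
        exact le_trans h2 (hAle m)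
      · right; left
        have h1 := sep (T := T) (ξ := ξ) hT (htT m) hlen'.symm hlex
        have h2 : bT T ξ (t m) ≤ aT T ξ s := by
          rw [bT_eq hT hpr hξ (htT m), aT_eq]
          exact ENNReal.toReal_mono (eA_ne_top hT hpr hξ hs) h1
        exact le_trans (hBle m) h2
  have hsep : q ≤ A ∨ B ≤ q := by
    rcases hq with ⟨s, hs, rfl⟩ | ⟨s, hs, rfl⟩
    · rcases hkey s hs with h | h | h
      · exact Or.inl (le_trans (hab_le s hs) h)
      · exact Or.inr (le_trans h (le_refl _))
      · left
        rw [h]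
        exact hAle s.length
    · rcases hkey s hs with h | h | h
      · exact Or.inl h
      · exact Or.inr (le_trans h (hab_le s hs))
      · right
        rw [h]
        exact hBle s.length
  rw [Real.dist_eq] at hdist
  rcases hsep with h | h
  · have : mid - q ≥ cR / 2 := by rw [hmid]; linarith
    have habs : |mid - q| ≥ cR / 2 := le_trans this (le_abs_self _)
    linarith [abs_sub_comm mid q ▸ habs]
  · have : q - mid ≥ cR / 2 := by rw [hmid]; linarith
    have habs : |mid - q| ≥ cR / 2 := by
      rw [abs_sub_comm]; exact le_trans this (le_abs_self _)
    linarith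

end Std14


theorem stmt14 (T : Set (List ℕ)) (ξ : List ℕ → ℝ≥0∞)
    (hT : IsTree T) (hpr : Pruned T) (hξ : IsIPM T ξ) :
    FreeIPM T ξ ↔ Set.Icc (0 : ℝ) 1 ⊆ closure (Qxi T ξ) := by
  constructor
  · exact Std14.fwd hT hpr hξ
  · exact Std14.bwd hT hpr hξ
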